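/- Let v be monotone submodular with v(∅)=0 and let the decision map X be maximal. Then in every pure Nash equilibrium p of the pricing game, the utility of each seller i equals v(N) - v(N\{i}); in particular, if v(N) - v(N\{i}) > 0 then p_i = v(N) - v(N\{i}) and i ∈ X(p). -/

import Mathlib

/-- For monotone submodular `v` with `v ∅ = 0` and a maximal
decision map `X`, in every pure Nash equilibrium the utility of each seller `i`
equals `v(N) - v(N \ {i})`; in particular if this marginal is positive then
`p i` equals it and `i` is selected. -/
theorem stmt8 {n : ℕ} (v : Finset (Fin n) → ℝ)
    (hmono : ∀ S T : Finset (Fin n), S ⊆ T → v S ≤ v T)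
    (hsub : ∀ S T : Finset (Fin n), v (S ∪ T) + v (S ∩ T) ≤ v S + v T)
    (hv0 : v ∅ = 0)
    (X : (Fin n → ℝ) → Finset (Fin n))
    (hXd : ∀ q : Fin n → ℝ, (∀ i, 0 ≤ q i) → ∀ T : Finset (Fin n),
      v T - ∑ i ∈ T, q i ≤ v (X q) - ∑ i ∈ X q, q i)
    (hXmax : ∀ q : Fin n → ℝ, (∀ i, 0 ≤ q i) → ∀ T : Finset (Fin n),
      (∀ U : Finset (Fin n), v U - ∑ i ∈ U, q i ≤ v T - ∑ i ∈ T, q i) →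
      ¬ X q ⊂ T)
    (p : Fin n → ℝ) (hp : ∀ i, 0 ≤ p i)
    (hnash : ∀ i : Fin n, ∀ q : ℝ, 0 ≤ q →
      (if i ∈ X (Function.update p i q) then q else 0) ≤
      (if i ∈ X p then p i else 0)) :
    ∀ i : Fin n,
      (if i ∈ X p then p i else 0) = v Finset.univ - v (Finset.univ.erase i) ∧
      (0 < v Finset.univ - v (Finset.univ.erase i) →
        p i = v Finset.univ - v (Finset.univ.erase i) ∧ i ∈ X p) := by
  classical
  -- notation
  set W : ℝ := v (X p) - ∑ j ∈ X p, p j with hWdef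
  have hW : ∀ T : Finset (Fin n), v T - ∑ j ∈ T, p j ≤ W := hXd p hp
  have hu : ∀ k, (0:ℝ) ≤ (if k ∈ X p then p k else 0) := by
    intro k; split
    · exact hp k
    · exact le_refl 0
  -- KEY: no seller k can gain more than its current utility from any bundle
  have key : ∀ (k : Fin n) (S : Finset (Fin n)), k ∉ S →
      v (insert k S) - ∑ j ∈ S, p j ≤ W + (if k ∈ X p then p k else 0) := by
    intro k S hkS
    by_contra hcon
    push_neg at hcon
    set uk : ℝ := (if k ∈ X p then p k else 0) with hukdef
    set q : ℝ := (uk + (v (insert k S) - ∑ j ∈ S, p j - W)) / 2 with hqdef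
    have huk0 : 0 ≤ uk := hu k
    have h1 : uk < q := by
      rw [hqdef]; linarith
    have h2 : q < v (insert k S) - ∑ j ∈ S, p j - W := by
      rw [hqdef]; linarith
    have hq0 : 0 ≤ q := le_trans huk0 (le_of_lt h1)
    set p' : Fin n → ℝ := Function.update p k q with hp'def
    have hp' : ∀ j, 0 ≤ p' j := by
      intro j
      rcases eq_or_ne j k with rfl | hne
      · rw [hp'def]; simpa using hq0
      · rw [hp'def, Function.update_of_ne hne]; exact hp j
    have hkX : k ∈ X p' := by
      by_contra hk
      have hd := hXd p' hp' (insert k S)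
      have hs1 : ∑ j ∈ insert k S, p' j = q + ∑ j ∈ S, p j := by
        rw [Finset.sum_insert hkS]
        congr 1
        · rw [hp'def]; simp
        · exact Finset.sum_congr rfl (fun j hj => by
            rw [hp'def, Function.update_of_ne (by rintro rfl; exact hkS hj)])
      have hs2 : ∑ j ∈ X p', p' j = ∑ j ∈ X p', p j :=
        Finset.sum_congr rfl (fun j hj => by
          rw [hp'def, Function.update_of_ne (by rintro rfl; exact hk hj)])
      have h3 := hW (X p')
      rw [hs1, hs2] at hd
      linarith
    have hn := hnash k q hq0
    rw [← hp'def] at hn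
    rw [if_pos hkX, ← hukdef] at hn
    linarith
  -- submodular marginal lower bound
  have hmarg : ∀ (i : Fin n) (T : Finset (Fin n)), i ∉ T →
      v Finset.univ - v (Finset.univ.erase i) ≤ v (insert i T) - v T := by
    intro i T hiT
    have h := hsub (insert i T) (Finset.univ.erase i)
    have h1 : insert i T ∪ Finset.univ.erase i = Finset.univ := by
      ext x
      simp only [Finset.mem_union, Finset.mem_insert, Finset.mem_erase,
        Finset.mem_univ, iff_true, and_true]
      by_cases hx : x = i
      · exact Or.inl (Or.inl hx)
      · exact Or.inr hx
    have h2 : insert i T ∩ Finset.univ.erase i = T := by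
      ext x
      simp only [Finset.mem_inter, Finset.mem_insert, Finset.mem_erase,
        Finset.mem_univ, and_true]
      constructor
      · rintro ⟨rfl | hx, hne⟩
        · exact absurd rfl hne
        · exact hx
      · intro hx
        exact ⟨Or.inr hx, fun h => hiT (h ▸ hx)⟩
    rw [h1, h2] at h
    linarith
  have hm0 : ∀ i : Fin n, 0 ≤ v Finset.univ - v (Finset.univ.erase i) := by
    intro i
    have := hmono _ _ (Finset.erase_subset i Finset.univ)
    linarith
  -- lower bound on utility
  have hlow : ∀ i : Fin n,
      v Finset.univ - v (Finset.univ.erase i) ≤ (if i ∈ X p then p i else 0) := by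
    intro i
    by_contra hcon
    push_neg at hcon
    set ui : ℝ := (if i ∈ X p then p i else 0) with huidef
    set m : ℝ := v Finset.univ - v (Finset.univ.erase i) with hmdef
    set q : ℝ := (ui + m) / 2 with hqdef
    have hui0 : 0 ≤ ui := hu i
    have h1 : ui < q := by rw [hqdef]; linarith
    have h2 : q < m := by rw [hqdef]; linarith
    have hq0 : 0 ≤ q := le_trans hui0 (le_of_lt h1)
    set p' : Fin n → ℝ := Function.update p i q with hp'def
    have hp' : ∀ j, 0 ≤ p' j := by
      intro j
      rcases eq_or_ne j i with rfl | hne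
      · rw [hp'def]; simpa using hq0
      · rw [hp'def, Function.update_of_ne hne]; exact hp j
    have hiX : i ∈ X p' := by
      by_contra hi
      have hd := hXd p' hp' (insert i (X p'))
      rw [Finset.sum_insert hi] at hd
      have hpi : p' i = q := by rw [hp'def]; simp
      have h3 := hmarg i (X p') hi
      rw [hpi] at hd
      linarith
    have hn := hnash i q hq0
    rw [← hp'def] at hn
    rw [if_pos hiX, ← huidef] at hn
    linarith
  -- main
  intro i
  by_cases hi : i ∈ X p
  swap
  · have h1 : (if i ∈ X p then p i else 0) = 0 := if_neg hi
    have h2 := hlow i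
    have h3 := hm0 i
    rw [h1] at h2 ⊢
    constructor
    · linarith
    · intro hpos; exfalso; linarith
  · -- upper bound: find a maximizer avoiding i
    obtain ⟨T, hiT, hT⟩ : ∃ T : Finset (Fin n), i ∉ T ∧ W ≤ v T - ∑ j ∈ T, p j := by
      by_contra hcon
      push_neg at hcon
      set F : Finset (Finset (Fin n)) :=
        Finset.univ.filter (fun T : Finset (Fin n) => i ∉ T) with hFdef
      have hFne : F.Nonempty := ⟨∅, by simp [hFdef]⟩
      set M : ℝ := F.sup' hFne (fun T => v T - ∑ j ∈ T, p j) with hMdef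
      have hMlt : M < W := by
        rw [hMdef]
        rw [Finset.sup'_lt_iff]
        intro T hTF
        have : i ∉ T := by
          rw [hFdef] at hTF
          exact (Finset.mem_filter.mp hTF).2
        exact hcon T this
      set ε : ℝ := (W - M) / 2 with hεdef
      have hε : 0 < ε := by rw [hεdef]; linarith
      set q : ℝ := p i + ε with hqdef
      have hq0 : 0 ≤ q := by have := hp i; rw [hqdef]; linarith
      set p' : Fin n → ℝ := Function.update p i q with hp'def
      have hp' : ∀ j, 0 ≤ p' j := by
        intro j
        rcases eq_or_ne j i with rfl | hne
        · rw [hp'def]; simpa using hq0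
        · rw [hp'def, Function.update_of_ne hne]; exact hp j
      have hiT' : i ∉ X p' := by
        intro hmem
        have hn := hnash i q hq0
        rw [← hp'def] at hn
        rw [if_pos hmem, if_pos hi] at hn
        rw [hqdef] at hn
        linarith
      have hd := hXd p' hp' (X p)
      have hs1 : ∑ j ∈ X p, p' j = q + ∑ j ∈ X p \ {i}, p j := by
        rw [hp'def]; exact Finset.sum_update_of_mem hi p q
      have hs1' : ∑ j ∈ X p \ {i}, p j = ∑ j ∈ X p, p j - p i := by
        rw [Finset.sdiff_singleton_eq_erase]
        exact Finset.sum_erase_eq_sub hi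
      have hs2 : ∑ j ∈ X p', p' j = ∑ j ∈ X p', p j :=
        Finset.sum_congr rfl (fun j hj => by
          rw [hp'def, Function.update_of_ne (by rintro rfl; exact hiT' hj)])
      have hXF : X p' ∈ F := by
        rw [hFdef]; exact Finset.mem_filter.mpr ⟨Finset.mem_univ _, hiT'⟩
      have hle : v (X p') - ∑ j ∈ X p', p j ≤ M := by
        rw [hMdef]
        exact Finset.le_sup' (fun T => v T - ∑ j ∈ T, p j) hXF
      rw [hs1, hs1', hs2, hqdef, hεdef] at hd
      linarith [hWdef]
    -- zero prices on T outside X p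
    have hT0 : ∀ k ∈ T, k ∉ X p → p k = 0 := by
      intro k hk hkX
      have h1 := key k (T.erase k) (Finset.notMem_erase k T)
      rw [Finset.insert_erase hk, if_neg hkX] at h1
      have h2 : ∑ j ∈ T.erase k, p j = ∑ j ∈ T, p j - p k :=
        Finset.sum_erase_eq_sub hk
      rw [h2] at h1
      have := hp k
      linarith
    -- marginal of any k over supersets of T bounded by its utility
    have hmargT : ∀ k, k ∉ T → ∀ S : Finset (Fin n), T ⊆ S → k ∉ S →
        v (insert k S) - v S ≤ (if k ∈ X p then p k else 0) := by
      intro k hk S hTS hkS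
      have h1 := key k T hk
      have h2 := hsub S (insert k T)
      have hst : S ∪ insert k T = insert k S := by
        ext x
        simp only [Finset.mem_union, Finset.mem_insert]
        constructor
        · rintro (hx | rfl | hx)
          · exact Or.inr hx
          · exact Or.inl rfl
          · exact Or.inr (hTS hx)
        · rintro (rfl | hx)
          · exact Or.inr (Or.inl rfl)
          · exact Or.inl hx
      have hst2 : S ∩ insert k T = T := by
        ext x
        simp only [Finset.mem_inter, Finset.mem_insert]
        constructor
        · rintro ⟨hxS, rfl | hxT⟩
          · exact absurd hxS hkS
          · exact hxT
        · intro hx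
          exact ⟨hTS hx, Or.inr hx⟩
      rw [hst, hst2] at h2
      linarith
    -- accumulate marginals
    have hsum : ∀ D : Finset (Fin n), Disjoint D T →
        v (T ∪ D) ≤ v T + ∑ k ∈ D, (if k ∈ X p then p k else 0) := by
      intro D
      induction D using Finset.induction_on with
      | empty =>
          intro _
          rw [Finset.union_empty, Finset.sum_empty, add_zero]
      | @insert a D' haD' ih =>
          intro hdisj
          have haT : a ∉ T := Finset.disjoint_left.mp hdisj (Finset.mem_insert_self a D')
          have hd' : Disjoint D' T :=
            Finset.disjoint_of_subset_left (Finset.subset_insert a D') hdisj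
          have haS : a ∉ T ∪ D' := by
            simp only [Finset.mem_union, not_or]
            exact ⟨haT, haD'⟩
          have h1 := hmargT a haT (T ∪ D') (Finset.subset_union_left) haS
          have h2 : T ∪ insert a D' = insert a (T ∪ D') := Finset.union_insert a T D'
          rw [h2, Finset.sum_insert haD']
          have ih' := ih hd'
          linarith
    have hTsub : T ⊆ Finset.univ.erase i := by
      intro x hx
      exact Finset.mem_erase.mpr ⟨fun h => hiT (h ▸ hx), Finset.mem_univ x⟩
    have happ := hsum (Finset.univ.erase i \ T) Finset.sdiff_disjoint
    rw [Finset.union_sdiff_of_subset hTsub] at happ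
    -- rewrite the utility sum
    have hsplit1 : ∑ k ∈ (Finset.univ.erase i \ T), (if k ∈ X p then p k else 0)
        = ∑ k ∈ ((Finset.univ.erase i \ T).filter (· ∈ X p)), p k :=
      (Finset.sum_filter _ _).symm
    have hset : (Finset.univ.erase i \ T).filter (· ∈ X p) = (X p).erase i \ T := by
      ext x
      simp only [Finset.mem_filter, Finset.mem_sdiff, Finset.mem_erase, Finset.mem_univ,
        and_true, true_and]
      tauto
    have e1 : (X p).erase i \ T = (X p).erase i \ ((X p).erase i ∩ T) :=
      (Finset.sdiff_inter_self_left _ _).symm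
    have e2 : ∑ j ∈ (X p).erase i \ ((X p).erase i ∩ T), p j
        = ∑ j ∈ (X p).erase i, p j - ∑ j ∈ (X p).erase i ∩ T, p j :=
      Finset.sum_sdiff_eq_sub Finset.inter_subset_left
    have e3 : (X p).erase i ∩ T = X p ∩ T := by
      ext x
      simp only [Finset.mem_inter, Finset.mem_erase]
      constructor
      · rintro ⟨⟨_, h1⟩, h2⟩; exact ⟨h1, h2⟩
      · rintro ⟨h1, h2⟩; exact ⟨⟨fun h => hiT (h ▸ h2), h1⟩, h2⟩
    have e4 : ∑ j ∈ (X p).erase i, p j = ∑ j ∈ X p, p j - p i :=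
      Finset.sum_erase_eq_sub hi
    have e5 : ∑ j ∈ T, p j = ∑ j ∈ T.filter (· ∈ X p), p j := by
      rw [← Finset.sum_filter_add_sum_filter_not T (· ∈ X p) p]
      have z : ∑ j ∈ T.filter (fun j => ¬ j ∈ X p), p j = 0 :=
        Finset.sum_eq_zero (fun j hj =>
          hT0 j (Finset.mem_filter.mp hj).1 (Finset.mem_filter.mp hj).2)
      rw [z, add_zero]
    have e6 : T.filter (· ∈ X p) = X p ∩ T := by
      ext x
      simp only [Finset.mem_filter, Finset.mem_inter]
      tauto
    have hvuniv : v (X p) ≤ v Finset.univ := hmono _ _ (Finset.subset_univ _)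
    have hWT := hW T
    -- assemble the upper bound p i ≤ m_i
    have hup : p i ≤ v Finset.univ - v (Finset.univ.erase i) := by
      rw [hsplit1, hset, e1, e2, e3, e4] at happ
      rw [e5, e6] at hWT hT
      rw [hWdef] at hWT hT
      linarith
    have hlo := hlow i
    rw [if_pos hi] at hlo ⊢
    have heq : p i = v Finset.univ - v (Finset.univ.erase i) := le_antisymm hup hlo
    exact ⟨heq, fun _ => ⟨heq, hi⟩⟩
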